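/- Let Q : ℕ∪{0} → ℕ∪{0} satisfy Q(0) = 0 and Q(k) ≤ k − 1 for all k ≥ 1, and define the sequence (S_k) by S_0 = 1 and S_k = S_{k−1} + S_{Q(k)} for k ≥ 1. Then (S_k)_{k≥0} is strictly increasing, and for every nonnegative integer n there exists a unique sequence (x_k)_{k≥0} ∈ {0,1}^{ℕ∪{0}} with finitely many 1's such that Σ_{k≥0} x_k S_k = n and, whenever x_k = 1, then x_j = 0 for all j with Q(k+1) ≤ j ≤ k−1. -/

import Mathlib

section Aux

variable {Q S : ℕ → ℕ}

private lemma aux_Spos (hS0 : S 0 = 1) (hSrec : ∀ k, S (k + 1) = S k + S (Q (k + 1))) :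
    ∀ k, 1 ≤ S k := by
  intro k
  induction k with
  | zero => omega
  | succ m ih => rw [hSrec]; omega

private lemma aux_mono (hS0 : S 0 = 1) (hSrec : ∀ k, S (k + 1) = S k + S (Q (k + 1))) :
    StrictMono S := by
  apply strictMono_nat_of_lt_succ
  intro n
  have h1 := aux_Spos hS0 hSrec (Q (n + 1))
  have h2 := hSrec n
  show S n < S (n + 1)
  omega

private lemma aux_Sge (hS0 : S 0 = 1) (hSrec : ∀ k, S (k + 1) = S k + S (Q (k + 1))) :
    ∀ k, k + 1 ≤ S k := by
  intro k
  induction k with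
  | zero => omega
  | succ m ih =>
    have : S m < S (m + 1) := aux_mono hS0 hSrec (Nat.lt_succ_self m)
    omega

/-- Key bound: any admissible digit string summed over `range N` is `< S N`. -/
private lemma aux_bound (hQ : ∀ k, 1 ≤ k → Q k + 1 ≤ k)
    (hS0 : S 0 = 1) (hSrec : ∀ k, S (k + 1) = S k + S (Q (k + 1))) :
    ∀ N, ∀ x : ℕ → ℕ, (∀ k, x k ≤ 1) →
      (∀ k, x k = 1 → ∀ j, Q (k + 1) ≤ j → j < k → x j = 0) →
      ∑ k ∈ Finset.range N, x k * S k < S N := by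
  intro N
  induction N using Nat.strong_induction_on with
  | _ N ih =>
    intro x hx hgood
    match N with
    | 0 => simpa [hS0] using Nat.zero_lt_one
    | M + 1 =>
      rcases Nat.le_one_iff_eq_zero_or_eq_one.mp (hx M) with h0 | h1
      · rw [Finset.sum_range_succ, h0]
        have h1 := ih M (Nat.lt_succ_self M) x hx hgood
        have h2 := aux_Spos hS0 hSrec (Q (M + 1))
        rw [hSrec]; omega
      · set q := Q (M + 1) with hqdef
        have hqM : q ≤ M := by have := hQ (M + 1) (by omega); omega
        have hzero : ∀ j ∈ Finset.Ico q M, x j * S j = 0 := by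
          intro j hj
          rw [Finset.mem_Ico] at hj
          rw [hgood M h1 j hj.1 hj.2, zero_mul]
        have hsplit : ∑ k ∈ Finset.range M, x k * S k
            = ∑ k ∈ Finset.range q, x k * S k := by
          rw [Finset.range_eq_Ico,
            ← Finset.sum_Ico_consecutive _ (Nat.zero_le q) hqM,
            Finset.sum_eq_zero hzero, add_zero, ← Finset.range_eq_Ico]
        have hlt : ∑ k ∈ Finset.range q, x k * S k < S q :=
          ih q (by omega) x hx hgood
        have hrec := hSrec M
        rw [← hqdef] at hrec
        rw [Finset.sum_range_succ, h1, one_mul, hsplit, hrec]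
        omega

/-- Convert the finsum to a finite sum over a range containing the support. -/
private lemma aux_sum_eq (x : ℕ → ℕ) (hx : ∀ k, x k ≤ 1) {N : ℕ}
    (hN : ∀ j, x j = 1 → j < N) :
    (∑ᶠ k : ℕ, x k * S k) = ∑ k ∈ Finset.range N, x k * S k := by
  apply finsum_eq_sum_of_support_subset
  intro k hk
  simp only [Function.mem_support, ne_eq] at hk
  have hxk : x k = 1 := by
    have := hx k
    rcases Nat.le_one_iff_eq_zero_or_eq_one.mp this with h | h
    · exfalso; apply hk; rw [h, zero_mul]
    · exact h
  simpa using hN k hxk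

/-- Each digit that is 1 contributes at least `S j` to the sum. -/
private lemma aux_term_le (x : ℕ → ℕ) (hx : ∀ k, x k ≤ 1)
    (hfin : Set.Finite {k : ℕ | x k = 1}) {n j : ℕ}
    (hsum : (∑ᶠ k : ℕ, x k * S k) = n) (hj : x j = 1) : S j ≤ n := by
  obtain ⟨N, hN⟩ := hfin.toFinset.exists_nat_subset_range
  have hN' : ∀ i, x i = 1 → i < N := by
    intro i hi
    have : i ∈ hfin.toFinset := by simpa using hi
    simpa using hN this
  rw [aux_sum_eq x hx hN'] at hsum
  have hjN : j ∈ Finset.range N := by simpa using hN' j hj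
  calc S j = x j * S j := by rw [hj, one_mul]
    _ ≤ ∑ k ∈ Finset.range N, x k * S k :=
        Finset.single_le_sum (f := fun k => x k * S k) (fun i _ => Nat.zero_le _) hjN
    _ = n := hsum

private lemma aux_exists (hQ : ∀ k, 1 ≤ k → Q k + 1 ≤ k)
    (hS0 : S 0 = 1) (hSrec : ∀ k, S (k + 1) = S k + S (Q (k + 1))) :
    ∀ n : ℕ, ∃ x : ℕ → ℕ,
      (∀ k, x k ≤ 1) ∧ (Set.Finite {k : ℕ | x k = 1}) ∧
      (∑ᶠ k : ℕ, x k * S k) = n ∧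
      (∀ k, x k = 1 → ∀ j, Q (k + 1) ≤ j → j < k → x j = 0) := by
  intro n
  induction n using Nat.strong_induction_on with
  | _ n ih =>
    rcases Nat.eq_zero_or_pos n with rfl | hn
    · refine ⟨fun _ => 0, by simp, by simp, by simp, by simp⟩
    · -- greedy step
      set k := Nat.findGreatest (fun k => S k ≤ n) n with hkdef
      have hk1 : S k ≤ n := by
        have h := Nat.findGreatest_spec (P := fun k => S k ≤ n) (Nat.zero_le n)
          (by simp only [hS0]; omega)
        rw [← hkdef] at h
        exact h
      have hk2 : n < S (k + 1) := by
        by_contra h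
        push_neg at h
        have hkn : k + 1 ≤ n := by
          have := aux_Sge hS0 hSrec (k + 1); omega
        have h2 := Nat.le_findGreatest (P := fun k => S k ≤ n) hkn h
        rw [← hkdef] at h2
        omega
      set q := Q (k + 1) with hqdef
      have hqk : q ≤ k := by have := hQ (k + 1) (by omega); omega
      have hSk1 : 1 ≤ S k := aux_Spos hS0 hSrec k
      set r := n - S k with hrdef
      have hrq : r < S q := by
        have h := hSrec k
        rw [← hqdef] at h
        omega
      have hrn : r < n := by omega
      obtain ⟨y, hy1, hy2, hy3, hy4⟩ := ih r hrn
      have hysmall : ∀ j, y j = 1 → j < q := by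
        intro j hj
        by_contra h
        push_neg at h
        have h1 : S q ≤ S j := (aux_mono hS0 hSrec).monotone h
        have h2 : S j ≤ r := aux_term_le y hy1 hy2 hy3 hj
        omega
      have hyk : y k = 0 := by
        rcases Nat.le_one_iff_eq_zero_or_eq_one.mp (hy1 k) with h | h
        · exact h
        · exact absurd (hysmall k h) (by omega)
      refine ⟨fun j => if j = k then 1 else y j, ?_, ?_, ?_, ?_⟩
      · intro j; by_cases h : j = k <;> simp [h, hy1 j]
      · apply Set.Finite.subset (hy2.insert k)
        intro j hj
        simp only [Set.mem_setOf_eq] at hj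
        by_cases h : j = k
        · simp [h]
        · simp only [h, if_false] at hj; simp [hj]
      · have hbound : ∀ j, (if j = k then 1 else y j) = 1 → j < k + 1 := by
          intro j hj
          by_cases h : j = k
          · omega
          · rw [if_neg h] at hj; have := hysmall j hj; omega
        rw [aux_sum_eq (S := S) _ (by intro j; by_cases h : j = k <;> simp [h, hy1 j]) hbound]
        have hy3' : ∑ j ∈ Finset.range (k + 1), y j * S j = r := by
          rw [← aux_sum_eq (S := S) y hy1 (fun j hj => by have := hysmall j hj; omega), hy3]
        have : ∑ j ∈ Finset.range (k + 1), (if j = k then 1 else y j) * S j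
            = ∑ j ∈ Finset.range (k + 1), (y j * S j + if j = k then S k else 0) := by
          apply Finset.sum_congr rfl
          intro j _
          by_cases h : j = k
          · subst h; rw [if_pos rfl, if_pos rfl, hyk]; ring
          · rw [if_neg h, if_neg h]; ring
        rw [this, Finset.sum_add_distrib, hy3', Finset.sum_ite_eq' (Finset.range (k + 1)) k]
        simp only [Finset.mem_range, Nat.lt_succ_self, if_pos]
        omega
      · intro m hm j hj1 hj2
        simp only at hm ⊢
        by_cases hmk : m = k
        · subst hmk
          have hjk : j ≠ k := by omega
          rw [if_neg hjk]
          rcases Nat.le_one_iff_eq_zero_or_eq_one.mp (hy1 j) with h | h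
          · exact h
          · exact absurd (hysmall j h) (by rw [← hqdef] at hj1; omega)
        · rw [if_neg hmk] at hm
          have hmq : m < q := hysmall m hm
          have hjk : j ≠ k := by omega
          rw [if_neg hjk]
          exact hy4 m hm j hj1 hj2

private lemma aux_unique (hQ : ∀ k, 1 ≤ k → Q k + 1 ≤ k)
    (hS0 : S 0 = 1) (hSrec : ∀ k, S (k + 1) = S k + S (Q (k + 1))) :
    ∀ n : ℕ, ∀ x y : ℕ → ℕ,
      (∀ k, x k ≤ 1) → (Set.Finite {k : ℕ | x k = 1}) →
      (∑ᶠ k : ℕ, x k * S k) = n →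
      (∀ k, x k = 1 → ∀ j, Q (k + 1) ≤ j → j < k → x j = 0) →
      (∀ k, y k ≤ 1) → (Set.Finite {k : ℕ | y k = 1}) →
      (∑ᶠ k : ℕ, y k * S k) = n →
      (∀ k, y k = 1 → ∀ j, Q (k + 1) ≤ j → j < k → y j = 0) →
      x = y := by
  intro n
  induction n using Nat.strong_induction_on with
  | _ n ih =>
    intro x y hx1 hx2 hx3 hx4 hy1 hy2 hy3 hy4
    rcases Nat.eq_zero_or_pos n with rfl | hn
    · have hz : ∀ (z : ℕ → ℕ), (∀ k, z k ≤ 1) → Set.Finite {k : ℕ | z k = 1} →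
          (∑ᶠ k : ℕ, z k * S k) = 0 → ∀ j, z j = 0 := by
        intro z hz1 hz2 hz3 j
        have : z j ≠ 1 := by
          intro h
          have := aux_term_le z hz1 hz2 hz3 h
          have := aux_Spos hS0 hSrec j
          omega
        have := hz1 j; omega
      funext j
      rw [hz x hx1 hx2 hx3 j, hz y hy1 hy2 hy3 j]
    · -- find the top digit of x
      have topspec : ∀ (z : ℕ → ℕ), (∀ k, z k ≤ 1) → Set.Finite {k : ℕ | z k = 1} →
          (∑ᶠ k : ℕ, z k * S k) = n →
          (∀ k, z k = 1 → ∀ j, Q (k + 1) ≤ j → j < k → z j = 0) →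
          ∃ m, z m = 1 ∧ (∀ j, z j = 1 → j ≤ m) ∧ S m ≤ n ∧ n < S (m + 1) := by
        intro z hz1 hz2 hz3 hz4
        have hne : hz2.toFinset.Nonempty := by
          rw [Finset.nonempty_iff_ne_empty]
          intro h
          have hzz : ∀ j, z j = 0 := by
            intro j
            have : z j ≠ 1 := by
              intro hj
              have : j ∈ hz2.toFinset := by simpa using hj
              rw [h] at this; simp at this
            have := hz1 j; omega
          rw [show (∑ᶠ k : ℕ, z k * S k) = 0 by simp [hzz]] at hz3
          omega
        set m := hz2.toFinset.max' hne with hmdef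
        have hm1 : z m = 1 := by
          have := hz2.toFinset.max'_mem hne
          simpa using this
        have hm2 : ∀ j, z j = 1 → j ≤ m := by
          intro j hj
          exact hz2.toFinset.le_max' j (by simpa using hj)
        refine ⟨m, hm1, hm2, aux_term_le z hz1 hz2 hz3 hm1, ?_⟩
        have := aux_bound hQ hS0 hSrec (m + 1) z hz1 hz4
        rw [← aux_sum_eq (S := S) z hz1 (fun j hj => by have := hm2 j hj; omega), hz3] at this
        exact this
      obtain ⟨kx, hkx1, hkx2, hkx3, hkx4⟩ := topspec x hx1 hx2 hx3 hx4
      obtain ⟨ky, hky1, hky2, hky3, hky4⟩ := topspec y hy1 hy2 hy3 hy4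
      have hkk : kx = ky := by
        rcases lt_trichotomy kx ky with h | h | h
        · have : S (kx + 1) ≤ S ky := (aux_mono hS0 hSrec).monotone (by omega)
          omega
        · exact h
        · have : S (ky + 1) ≤ S kx := (aux_mono hS0 hSrec).monotone (by omega)
          omega
      subst hkk
      set k := kx
      have hSk1 : 1 ≤ S k := aux_Spos hS0 hSrec k
      -- strip off the top digit
      have strip : ∀ (z : ℕ → ℕ), (∀ i, z i ≤ 1) → Set.Finite {i : ℕ | z i = 1} →
          (∑ᶠ i : ℕ, z i * S i) = n →
          (∀ i, z i = 1 → ∀ j, Q (i + 1) ≤ j → j < i → z j = 0) →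
          z k = 1 → (∀ j, z j = 1 → j ≤ k) →
          (∀ i, (fun j => if j = k then 0 else z j) i ≤ 1) ∧
          Set.Finite {i : ℕ | (fun j => if j = k then 0 else z j) i = 1} ∧
          (∑ᶠ i : ℕ, (fun j => if j = k then 0 else z j) i * S i) = n - S k ∧
          (∀ i, (fun j => if j = k then 0 else z j) i = 1 →
            ∀ j, Q (i + 1) ≤ j → j < i → (fun j => if j = k then 0 else z j) j = 0) := by
        intro z hz1 hz2 hz3 hz4 hzk hztop
        refine ⟨?_, ?_, ?_, ?_⟩
        · intro i; by_cases h : i = k <;> simp [h, hz1 i]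
        · apply Set.Finite.subset hz2
          intro j hj
          simp only [Set.mem_setOf_eq] at hj ⊢
          by_cases h : j = k
          · simp [h] at hj
          · simpa [h] using hj
        · have hb : ∀ j, (if j = k then 0 else z j) = 1 → j < k + 1 := by
            intro j hj
            by_cases h : j = k
            · simp [h] at hj
            · rw [if_neg h] at hj; have := hztop j hj; omega
          rw [aux_sum_eq (S := S) _ (by intro j; by_cases h : j = k <;> simp [h, hz1 j]) hb]
          have hz3' : ∑ j ∈ Finset.range (k + 1), z j * S j = n := by
            rw [← aux_sum_eq (S := S) z hz1 (fun j hj => by have := hztop j hj; omega), hz3]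
          have hsplit : ∑ j ∈ Finset.range (k + 1), z j * S j
              = ∑ j ∈ Finset.range (k + 1), ((if j = k then 0 else z j) * S j
                  + if j = k then S k else 0) := by
            apply Finset.sum_congr rfl
            intro j _
            by_cases h : j = k
            · subst h; rw [if_pos rfl, if_pos rfl, hzk]; ring
            · rw [if_neg h, if_neg h]; ring
          rw [hz3'] at hsplit
          rw [Finset.sum_add_distrib, Finset.sum_ite_eq' (Finset.range (k + 1)) k] at hsplit
          simp only [Finset.mem_range, Nat.lt_succ_self, if_pos] at hsplit
          omega
        · intro i hi j hj1 hj2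
          simp only at hi ⊢
          by_cases hik : i = k
          · simp [hik] at hi
          · rw [if_neg hik] at hi
            by_cases hjk : j = k
            · simp [hjk]
            · rw [if_neg hjk]
              exact hz4 i hi j hj1 hj2
      obtain ⟨px1, px2, px3, px4⟩ := strip x hx1 hx2 hx3 hx4 hkx1 hkx2
      obtain ⟨py1, py2, py3, py4⟩ := strip y hy1 hy2 hy3 hy4 hky1 hky2
      have hlt : n - S k < n := by omega
      have heq := ih (n - S k) hlt _ _ px1 px2 px3 px4 py1 py2 py3 py4
      funext j
      by_cases h : j = k
      · rw [h, hkx1, hky1]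
      · have := congrFun heq j
        simpa [h] using this

end Aux

theorem stmt_16 (Q : ℕ → ℕ) (hQ0 : Q 0 = 0) (hQ : ∀ k, 1 ≤ k → Q k + 1 ≤ k)
    (S : ℕ → ℕ) (hS0 : S 0 = 1) (hSrec : ∀ k, S (k + 1) = S k + S (Q (k + 1))) :
    StrictMono S ∧
      ∀ n : ℕ, ∃! x : ℕ → ℕ,
        (∀ k, x k ≤ 1) ∧ (Set.Finite {k : ℕ | x k = 1}) ∧
        (∑ᶠ k : ℕ, x k * S k) = n ∧
        (∀ k, x k = 1 → ∀ j, Q (k + 1) ≤ j → j < k → x j = 0) := by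
  refine ⟨aux_mono hS0 hSrec, ?_⟩
  intro n
  obtain ⟨x, h1, h2, h3, h4⟩ := aux_exists hQ hS0 hSrec n
  refine ⟨x, ⟨h1, h2, h3, h4⟩, ?_⟩
  rintro y ⟨g1, g2, g3, g4⟩
  exact aux_unique hQ hS0 hSrec n y x g1 g2 g3 g4 h1 h2 h3 h4
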